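/- Let S be a measurable space, k : S × S → ℝ a bounded symmetric measurable kernel, P and Q probability measures on S, and m ≥ 2. Let v_1,…,v_m with v_i = (x_i, y_i) be i.i.d. with law P ⊗ Q, and define f(v_i, v_j) := k(x_i,x_j) + k(y_i,y_j) − k(x_i,y_j) − k(x_j,y_i). Then the U-statistic (1/(m(m−1))) Σ_{i≠j} f(v_i, v_j) has expectation equal to MMD²(k; P, Q). -/

import Mathlib

open MeasureTheory ProbabilityTheory

lemma pi_map_pair {α : Type*} [MeasurableSpace α] (μ : Measure α) [IsProbabilityMeasure μ]
    {m : ℕ} {i j : Fin m} (hij : i ≠ j) :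
    (Measure.pi fun _ : Fin m => μ).map (fun v => (v i, v j)) = μ.prod μ := by
  refine (Measure.prod_eq fun s t hs ht => ?_).symm
  rw [Measure.map_apply (by fun_prop) (hs.prod ht)]
  have hpre : (fun v : Fin m → α => (v i, v j)) ⁻¹' (s ×ˢ t)
      = Set.pi Set.univ (fun l => if l = i then s else if l = j then t else Set.univ) := by
    ext v
    simp only [Set.mem_preimage, Set.mem_prod, Set.mem_pi, Set.mem_univ, true_implies]
    constructor
    · rintro ⟨h1, h2⟩ l
      by_cases hli : l = i
      · simp [hli, h1]
      · by_cases hlj : l = j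
        · simp [hli, hlj, h2, Ne.symm hij]
        · simp [hli, hlj]
    · intro h
      have h1 := h i
      have h2 := h j
      rw [if_pos rfl] at h1
      rw [if_neg (Ne.symm hij), if_pos rfl] at h2
      exact ⟨h1, h2⟩
  rw [hpre, Measure.pi_pi]
  have hsub : ({i, j} : Finset (Fin m)) ⊆ Finset.univ := Finset.subset_univ _
  rw [← Finset.prod_subset hsub (fun l _ hl => ?_)]
  · rw [Finset.prod_pair hij]
    simp [Ne.symm hij]
  · simp only [Finset.mem_insert, Finset.mem_singleton, not_or] at hl
    rw [if_neg hl.1, if_neg hl.2]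
    simp

lemma integrable_of_abs_le {β : Type*} [MeasurableSpace β] (ν : Measure β)
    [IsFiniteMeasure ν] (h : β → ℝ) (B : ℝ) (hmeas : Measurable h)
    (hbd : ∀ x, |h x| ≤ B) : Integrable h ν :=
  (integrable_const B).mono' hmeas.aestronglyMeasurable
    (Filter.Eventually.of_forall fun x => by simpa using hbd x)

/-- **Unbiasedness of the equal-sample-size MMD U-statistic** (Theorem 2.2, Eq. 13).
With `v_i = (x_i, y_i)` i.i.d. with law `P ⊗ Q` and
`f(v, v') = k(x,x') + k(y,y') − k(x,y') − k(x',y)`,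
the U-statistic `(1/(m(m−1))) Σ_{i≠j} f(v_i, v_j)` has expectation `MMD²(k; P, Q)`. -/
theorem stmt_2
    {S : Type*} [MeasurableSpace S]
    (k : S × S → ℝ) (hk_meas : Measurable k)
    (hk_bdd : ∃ C : ℝ, ∀ p, |k p| ≤ C)
    (hk_symm : ∀ a b : S, k (a, b) = k (b, a))
    (P Q : Measure S) [IsProbabilityMeasure P] [IsProbabilityMeasure Q]
    (m : ℕ) (hm : 2 ≤ m)
    (f : S × S → S × S → ℝ)
    (hf : ∀ v v' : S × S,
      f v v' = k (v.1, v'.1) + k (v.2, v'.2) - k (v.1, v'.2) - k (v'.1, v.2))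
    (MMD2 : ℝ)
    (hMMD2 : MMD2 =
      (∫ w, k w ∂(P.prod P)) - 2 * (∫ w, k w ∂(P.prod Q)) + (∫ w, k w ∂(Q.prod Q))) :
    (∫ v : Fin m → S × S,
        (1 / ((m : ℝ) * ((m : ℝ) - 1))) *
          ∑ i, ∑ j, (if i ≠ j then f (v i) (v j) else 0)
      ∂(Measure.pi fun _ : Fin m => P.prod Q))
      = MMD2 := by
  obtain ⟨C, hC⟩ := hk_bdd
  set μ : Measure (S × S) := P.prod Q with hμ
  -- the two-point integrand
  set g : (S × S) × (S × S) → ℝ := fun w => f w.1 w.2 with hg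
  have hg_eq : ∀ w : (S × S) × (S × S),
      g w = k (w.1.1, w.2.1) + k (w.1.2, w.2.2) - k (w.1.1, w.2.2) - k (w.2.1, w.1.2) := by
    intro w; simp only [hg, hf]
  have hg_meas : Measurable g := by
    have : g = fun w : (S × S) × (S × S) =>
        k (w.1.1, w.2.1) + k (w.1.2, w.2.2) - k (w.1.1, w.2.2) - k (w.2.1, w.1.2) := by
      funext w; exact hg_eq w
    rw [this]; fun_prop
  have hkC : ∀ p, |k p| ≤ 4 * |C| + 4 := by
    intro p
    have h1 : |k p| ≤ |C| := (hC p).trans (le_abs_self C)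
    nlinarith [abs_nonneg C]
  have hgC : ∀ w, |g w| ≤ 4 * |C| + 4 := by
    intro w
    have b1 : |k (w.1.1, w.2.1)| ≤ |C| := (hC _).trans (le_abs_self C)
    have b2 : |k (w.1.2, w.2.2)| ≤ |C| := (hC _).trans (le_abs_self C)
    have b3 : |k (w.1.1, w.2.2)| ≤ |C| := (hC _).trans (le_abs_self C)
    have b4 : |k (w.2.1, w.1.2)| ≤ |C| := (hC _).trans (le_abs_self C)
    have habs : |g w| ≤ |k (w.1.1, w.2.1)| + |k (w.1.2, w.2.2)|
        + |k (w.1.1, w.2.2)| + |k (w.2.1, w.1.2)| := by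
      rw [hg_eq w]
      exact (abs_sub _ _).trans (add_le_add
        ((abs_sub _ _).trans (add_le_add (abs_add_le _ _) le_rfl)) le_rfl)
    linarith
  -- measure-preserving projections
  have mpP : MeasurePreserving (Prod.fst : S × S → S) μ P :=
    ⟨measurable_fst, by simp [hμ, Measure.map_fst_prod]⟩
  have mpQ : MeasurePreserving (Prod.snd : S × S → S) μ Q :=
    ⟨measurable_snd, by simp [hμ, Measure.map_snd_prod]⟩
  -- value of the double integral
  have hI : (∫ w, g w ∂(μ.prod μ)) = MMD2 := by
    have i1 : Integrable (fun w : (S × S) × (S × S) => k (w.1.1, w.2.1)) (μ.prod μ) :=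
      integrable_of_abs_le _ _ _ (hk_meas.comp (by fun_prop)) (fun w => hkC _)
    have i2 : Integrable (fun w : (S × S) × (S × S) => k (w.1.2, w.2.2)) (μ.prod μ) :=
      integrable_of_abs_le _ _ _ (hk_meas.comp (by fun_prop)) (fun w => hkC _)
    have i3 : Integrable (fun w : (S × S) × (S × S) => k (w.1.1, w.2.2)) (μ.prod μ) :=
      integrable_of_abs_le _ _ _ (hk_meas.comp (by fun_prop)) (fun w => hkC _)
    have i4 : Integrable (fun w : (S × S) × (S × S) => k (w.2.1, w.1.2)) (μ.prod μ) :=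
      integrable_of_abs_le _ _ _ (hk_meas.comp (by fun_prop)) (fun w => hkC _)
    have e1 : (∫ w : (S × S) × (S × S), k (w.1.1, w.2.1) ∂(μ.prod μ)) = ∫ w, k w ∂(P.prod P) := by
      have hmp : MeasurePreserving (Prod.map (Prod.fst : S × S → S) (Prod.fst : S × S → S))
          (μ.prod μ) (P.prod P) := mpP.prod mpP
      rw [← hmp.map_eq, integral_map hmp.measurable.aemeasurable
        (hk_meas.aestronglyMeasurable)]
      rfl
    have e2 : (∫ w : (S × S) × (S × S), k (w.1.2, w.2.2) ∂(μ.prod μ)) = ∫ w, k w ∂(Q.prod Q) := by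
      have hmp : MeasurePreserving (Prod.map (Prod.snd : S × S → S) (Prod.snd : S × S → S))
          (μ.prod μ) (Q.prod Q) := mpQ.prod mpQ
      rw [← hmp.map_eq, integral_map hmp.measurable.aemeasurable
        (hk_meas.aestronglyMeasurable)]
      rfl
    have e3 : (∫ w : (S × S) × (S × S), k (w.1.1, w.2.2) ∂(μ.prod μ)) = ∫ w, k w ∂(P.prod Q) := by
      have hmp : MeasurePreserving (Prod.map (Prod.fst : S × S → S) (Prod.snd : S × S → S))
          (μ.prod μ) (P.prod Q) := mpP.prod mpQ
      rw [← hmp.map_eq, integral_map hmp.measurable.aemeasurable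
        (hk_meas.aestronglyMeasurable)]
      rfl
    have e4 : (∫ w : (S × S) × (S × S), k (w.2.1, w.1.2) ∂(μ.prod μ)) = ∫ w, k w ∂(P.prod Q) := by
      have hmp : MeasurePreserving (Prod.map (Prod.snd : S × S → S) (Prod.fst : S × S → S))
          (μ.prod μ) (Q.prod P) := mpQ.prod mpP
      have hswap : (∫ w : S × S, k (w.2, w.1) ∂(Q.prod P)) = ∫ w, k w ∂(P.prod Q) := by
        rw [← Measure.prod_swap,
          integral_map measurable_swap.aemeasurable
            ((by fun_prop : Measurable fun w : S × S => k (w.2, w.1)).aestronglyMeasurable)]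
        exact integral_congr_ae (Filter.Eventually.of_forall fun w => by simp)
      calc (∫ w : (S × S) × (S × S), k (w.2.1, w.1.2) ∂(μ.prod μ))
          = ∫ w : S × S, k (w.2, w.1) ∂(Q.prod P) := by
            rw [← hmp.map_eq, integral_map hmp.measurable.aemeasurable
              ((by fun_prop : Measurable fun w : S × S => k (w.2, w.1)).aestronglyMeasurable)]
            rfl
        _ = ∫ w, k w ∂(P.prod Q) := hswap
    have : (∫ w, g w ∂(μ.prod μ)) =
        (∫ w : (S × S) × (S × S), k (w.1.1, w.2.1) ∂(μ.prod μ))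
        + (∫ w : (S × S) × (S × S), k (w.1.2, w.2.2) ∂(μ.prod μ))
        - (∫ w : (S × S) × (S × S), k (w.1.1, w.2.2) ∂(μ.prod μ))
        - (∫ w : (S × S) × (S × S), k (w.2.1, w.1.2) ∂(μ.prod μ)) := by
      calc (∫ w, g w ∂(μ.prod μ))
          = ∫ w : (S × S) × (S × S),
              (k (w.1.1, w.2.1) + k (w.1.2, w.2.2) - k (w.1.1, w.2.2)) - k (w.2.1, w.1.2)
              ∂(μ.prod μ) :=
            integral_congr_ae (Filter.Eventually.of_forall fun w => hg_eq w)
        _ = (∫ w : (S × S) × (S × S),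
              (k (w.1.1, w.2.1) + k (w.1.2, w.2.2) - k (w.1.1, w.2.2)) ∂(μ.prod μ))
            - ∫ w : (S × S) × (S × S), k (w.2.1, w.1.2) ∂(μ.prod μ) :=
            integral_sub ((i1.add i2).sub i3) i4
        _ = (∫ w : (S × S) × (S × S),
              (k (w.1.1, w.2.1) + k (w.1.2, w.2.2)) ∂(μ.prod μ))
            - (∫ w : (S × S) × (S × S), k (w.1.1, w.2.2) ∂(μ.prod μ))
            - ∫ w : (S × S) × (S × S), k (w.2.1, w.1.2) ∂(μ.prod μ) := by
            congr 1
            exact integral_sub (i1.add i2) i3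
        _ = (∫ w : (S × S) × (S × S), k (w.1.1, w.2.1) ∂(μ.prod μ))
            + (∫ w : (S × S) × (S × S), k (w.1.2, w.2.2) ∂(μ.prod μ))
            - (∫ w : (S × S) × (S × S), k (w.1.1, w.2.2) ∂(μ.prod μ))
            - ∫ w : (S × S) × (S × S), k (w.2.1, w.1.2) ∂(μ.prod μ) := by
            congr 2
            exact integral_add i1 i2
    rw [this, e1, e2, e3, e4, hMMD2]; ring
  -- each off-diagonal term integrates to MMD2
  have hpi : ∀ i j : Fin m, i ≠ j →
      MeasurePreserving (fun v : Fin m → S × S => (v i, v j))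
        (Measure.pi fun _ : Fin m => μ) (μ.prod μ) :=
    fun i j hij => ⟨by fun_prop, pi_map_pair μ hij⟩
  have hterm : ∀ i j : Fin m, i ≠ j →
      (∫ v : Fin m → S × S, f (v i) (v j) ∂(Measure.pi fun _ : Fin m => μ)) = MMD2 := by
    intro i j hij
    rw [← hI, ← (hpi i j hij).map_eq,
      integral_map ((hpi i j hij).measurable).aemeasurable hg_meas.aestronglyMeasurable]
  -- integrability of each summand
  have hint : ∀ i j : Fin m,
      Integrable (fun v : Fin m → S × S => if i ≠ j then f (v i) (v j) else 0)
        (Measure.pi fun _ : Fin m => μ) := by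
    intro i j
    by_cases hij : i ≠ j
    · simp only [if_pos hij]
      exact integrable_of_abs_le (β := Fin m → S × S) _ (fun v => f (v i) (v j)) _
        (by
          have : (fun v : Fin m → S × S => f (v i) (v j))
              = g ∘ (fun v => (v i, v j)) := rfl
          rw [this]; exact hg_meas.comp (by fun_prop))
        (fun v => hgC (v i, v j))
    · simp only [if_neg hij]; exact integrable_zero _ _ _
  -- compute the integral of the double sum
  have hsum : (∫ v : Fin m → S × S,
      (∑ i, ∑ j, (if i ≠ j then f (v i) (v j) else 0)) ∂(Measure.pi fun _ : Fin m => μ))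
      = (m : ℝ) * ((m : ℝ) - 1) * MMD2 := by
    rw [integral_finset_sum _ (fun i _ => integrable_finset_sum _ (fun j _ => hint i j))]
    have : ∀ i : Fin m, (∫ v : Fin m → S × S,
        (∑ j, if i ≠ j then f (v i) (v j) else 0) ∂(Measure.pi fun _ : Fin m => μ))
        = ((m : ℝ) - 1) * MMD2 := by
      intro i
      rw [integral_finset_sum _ (fun j _ => hint i j)]
      have heach : ∀ j : Fin m,
          (∫ v : Fin m → S × S, (if i ≠ j then f (v i) (v j) else 0)
            ∂(Measure.pi fun _ : Fin m => μ)) = if i ≠ j then MMD2 else 0 := by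
        intro j
        by_cases hij : i ≠ j
        · simp only [if_pos hij]; exact hterm i j hij
        · simp only [if_neg hij, integral_zero]
      have hsplit : ∀ j : Fin m,
          (if i ≠ j then MMD2 else 0) = MMD2 - (if j = i then MMD2 else 0) := by
        intro j
        by_cases h : j = i
        · simp [h]
        · simp [h, Ne.symm h]
      simp_rw [heach, hsplit, Finset.sum_sub_distrib, Finset.sum_const,
        Finset.sum_ite_eq' Finset.univ i (fun _ => MMD2), Finset.mem_univ, if_true,
        Finset.card_univ, Fintype.card_fin, nsmul_eq_mul]
      ring
    simp_rw [this]
    rw [Finset.sum_const, Finset.card_univ, Fintype.card_fin, nsmul_eq_mul]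
    ring
  rw [integral_const_mul, hsum]
  have hm0 : (m : ℝ) * ((m : ℝ) - 1) ≠ 0 := by
    have : (2 : ℝ) ≤ (m : ℝ) := by exact_mod_cast hm
    nlinarith
  field_simp
  exact mul_div_cancel_left₀ MMD2 (right_ne_zero_of_mul hm0)
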